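/- For any terms t, t' of the lambda calculus with constructors, if the case-completion ⌈t⌉ reduces in one CaseCase step to t', then t' reduces in finitely many CaseCase steps to ⌈t₀⌉ for some t₀ with t →_CaseCase t₀. -/

import Mathlib

/- Terms of the lambda calculus with `n` constructors (de Bruijn indices).
`Ob n` plays the role of `Option (Tm n)`: a case-binding is a partial map
`Fin n → Ob n` from constructors to terms. -/
mutual
inductive Tm (n : ℕ) : Type where
  | var : ℕ → Tm n
  | app : Tm n → Tm n → Tm n
  | lam : Tm n → Tm n
  | cst : Fin n → Tm n
  | cas : (Fin n → Ob n) → Tm n → Tm n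
inductive Ob (n : ℕ) : Type where
  | none : Ob n
  | some : Tm n → Ob n
end

namespace LC

variable {n : ℕ}

/- Shift free de Bruijn indices `≥ k` by `d`. -/
mutual
def lift (d k : ℕ) : Tm n → Tm n
  | .var i => .var (if i < k then i else i + d)
  | .app t u => .app (lift d k t) (lift d k u)
  | .lam t => .lam (lift d (k+1) t)
  | .cst c => .cst c
  | .cas θ t => .cas (fun c => liftO d k (θ c)) (lift d k t)
def liftO (d k : ℕ) : Ob n → Ob n
  | .none => .none
  | .some t => .some (lift d k t)
end

/- Lift a case-binding (used for the CaseLam rule, where the bound variable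
must not occur free in the binding). -/
def liftB (θ : Fin n → Ob n) : Fin n → Ob n := fun c => liftO 1 0 (θ c)

/- Substitution of `u` for the variable `k` (capture-avoiding). -/
mutual
def subst (u : Tm n) (k : ℕ) : Tm n → Tm n
  | .var i => if i < k then .var i else if i = k then lift k 0 u else .var (i-1)
  | .app t v => .app (subst u k t) (subst u k v)
  | .lam t => .lam (subst u (k+1) t)
  | .cst c => .cst c
  | .cas θ t => .cas (fun c => substO u k (θ c)) (subst u k t)
def substO (u : Tm n) (k : ℕ) : Ob n → Ob n
  | .none => .none
  | .some t => .some (subst u k t)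
end

/- `{θ}·(-)` applied inside an optional branch. -/
def casO (θ : Fin n → Ob n) : Ob n → Ob n
  | .none => .none
  | .some u => .some (.cas θ u)

/- Composition of case-bindings: `(θ∘φ)(c) = {θ}·φ(c)` for `c ∈ dom φ`. -/
def compB (θ φ : Fin n → Ob n) : Fin n → Ob n := fun c => casO θ (φ c)

/- One-step reduction of the lambda calculus with constructors:
AppLam, LamApp, CaseCons, CaseApp, CaseLam, CaseCase, closed under all contexts. -/
inductive Step : Tm n → Tm n → Prop where
  | appLam (t u : Tm n) : Step (.app (.lam t) u) (subst u 0 t)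
  | lamApp (t : Tm n) : Step (.lam (.app (lift 1 0 t) (.var 0))) t
  | caseCons (θ : Fin n → Ob n) (c : Fin n) (u : Tm n) :
      θ c = .some u → Step (.cas θ (.cst c)) u
  | caseApp (θ : Fin n → Ob n) (t u : Tm n) :
      Step (.cas θ (.app t u)) (.app (.cas θ t) u)
  | caseLam (θ : Fin n → Ob n) (t : Tm n) :
      Step (.cas θ (.lam t)) (.lam (.cas (liftB θ) t))
  | caseCase (θ φ : Fin n → Ob n) (t : Tm n) :
      Step (.cas θ (.cas φ t)) (.cas (compB θ φ) t)
  | appL {t t' : Tm n} (u : Tm n) : Step t t' → Step (.app t u) (.app t' u)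
  | appR (t : Tm n) {u u' : Tm n} : Step u u' → Step (.app t u) (.app t u')
  | lamC {t t' : Tm n} : Step t t' → Step (.lam t) (.lam t')
  | casT (θ : Fin n → Ob n) {t t' : Tm n} : Step t t' → Step (.cas θ t) (.cas θ t')
  | casB (θ : Fin n → Ob n) (c : Fin n) {u u' : Tm n} (t : Tm n) :
      θ c = .some u → Step u u' →
      Step (.cas θ t) (.cas (Function.update θ c (.some u')) t)

/- One-step reduction by the CaseCase rule only (closed under all contexts). -/
inductive StepCC : Tm n → Tm n → Prop where
  | caseCase (θ φ : Fin n → Ob n) (t : Tm n) :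
      StepCC (.cas θ (.cas φ t)) (.cas (compB θ φ) t)
  | appL {t t' : Tm n} (u : Tm n) : StepCC t t' → StepCC (.app t u) (.app t' u)
  | appR (t : Tm n) {u u' : Tm n} : StepCC u u' → StepCC (.app t u) (.app t u')
  | lamC {t t' : Tm n} : StepCC t t' → StepCC (.lam t) (.lam t')
  | casT (θ : Fin n → Ob n) {t t' : Tm n} : StepCC t t' → StepCC (.cas θ t) (.cas θ t')
  | casB (θ : Fin n → Ob n) (c : Fin n) {u u' : Tm n} (t : Tm n) :
      θ c = .some u → StepCC u u' →
      StepCC (.cas θ t) (.cas (Function.update θ c (.some u')) t)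

/- One-step reduction λC⁻ : every rule except CaseCase (closed under all contexts). -/
inductive StepM : Tm n → Tm n → Prop where
  | appLam (t u : Tm n) : StepM (.app (.lam t) u) (subst u 0 t)
  | lamApp (t : Tm n) : StepM (.lam (.app (lift 1 0 t) (.var 0))) t
  | caseCons (θ : Fin n → Ob n) (c : Fin n) (u : Tm n) :
      θ c = .some u → StepM (.cas θ (.cst c)) u
  | caseApp (θ : Fin n → Ob n) (t u : Tm n) :
      StepM (.cas θ (.app t u)) (.app (.cas θ t) u)
  | caseLam (θ : Fin n → Ob n) (t : Tm n) :
      StepM (.cas θ (.lam t)) (.lam (.cas (liftB θ) t))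
  | appL {t t' : Tm n} (u : Tm n) : StepM t t' → StepM (.app t u) (.app t' u)
  | appR (t : Tm n) {u u' : Tm n} : StepM u u' → StepM (.app t u) (.app t u')
  | lamC {t t' : Tm n} : StepM t t' → StepM (.lam t) (.lam t')
  | casT (θ : Fin n → Ob n) {t t' : Tm n} : StepM t t' → StepM (.cas θ t) (.cas θ t')
  | casB (θ : Fin n → Ob n) (c : Fin n) {u u' : Tm n} (t : Tm n) :
      θ c = .some u → StepM u u' →
      StepM (.cas θ t) (.cas (Function.update θ c (.some u')) t)

/- A term is defined when none of its subterms is a match failure `{θ}·c` with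
`c ∉ dom θ`. -/
inductive Defined : Tm n → Prop where
  | var (i : ℕ) : Defined (.var i)
  | cst (c : Fin n) : Defined (.cst c)
  | app {t u : Tm n} : Defined t → Defined u → Defined (.app t u)
  | lam {t : Tm n} : Defined t → Defined (.lam t)
  | cas {θ : Fin n → Ob n} {t : Tm n} :
      (∀ c u, θ c = .some u → Defined u) → Defined t →
      (∀ c, t = .cst c → θ c ≠ .none) → Defined (.cas θ t)

/- Hereditarily defined: every reduct (in any number of steps) is defined. -/
def HD (t : Tm n) : Prop := ∀ u, Relation.ReflTransGen Step t u → Defined u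

section Completion
variable [NeZero n]

/- The canonical match failure `{}·c₁` used to fill missing branches. -/
def failTm : Tm n := .cas (fun _ => .none) (.cst 0)

/- Case-completion: replace every case-binding by its total completion,
filling each missing branch with `{}·c₁`. -/
mutual
def cpl : Tm n → Tm n
  | .var i => .var i
  | .app t u => .app (cpl t) (cpl u)
  | .lam t => .lam (cpl t)
  | .cst c => .cst c
  | .cas θ t => .cas (fun c => .some (cplO (θ c))) (cpl t)
def cplO : Ob n → Tm n
  | .none => failTm
  | .some u => cpl u
end

end Completion

/- The structural measure μ. -/
mutual
def mes : Tm n → ℕ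
  | .var _ => 1
  | .cst _ => 1
  | .lam t => mes t + 1
  | .app t u => mes t + mes u
  | .cas θ t => mes t * ((∑ c : Fin n, mesO (θ c)) + 2)
def mesO : Ob n → ℕ
  | .none => 0
  | .some t => mes t
end

end LC

namespace LC


section Helpers
open Relation

lemma rtg_appL {t t' u : Tm n} (h : ReflTransGen StepCC t t') :
    ReflTransGen StepCC (.app t u) (.app t' u) :=
  ReflTransGen.lift (fun x => Tm.app x u) (fun _ _ hs => StepCC.appL u hs) _ _ h

lemma rtg_appR {t u u' : Tm n} (h : ReflTransGen StepCC u u') :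
    ReflTransGen StepCC (.app t u) (.app t u') :=
  ReflTransGen.lift (fun x => Tm.app t x) (fun _ _ hs => StepCC.appR t hs) _ _ h

lemma rtg_lam {t t' : Tm n} (h : ReflTransGen StepCC t t') :
    ReflTransGen StepCC (.lam t) (.lam t') :=
  ReflTransGen.lift Tm.lam (fun _ _ hs => StepCC.lamC hs) _ _ h

lemma rtg_casT (θ : Fin n → Ob n) {t t' : Tm n} (h : ReflTransGen StepCC t t') :
    ReflTransGen StepCC (.cas θ t) (.cas θ t') :=
  ReflTransGen.lift (Tm.cas θ) (fun _ _ hs => StepCC.casT θ hs) _ _ h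

lemma rtg_casB {ψ : Fin n → Ob n} {c : Fin n} {u u' : Tm n} (t : Tm n)
    (hc : ψ c = .some u) (h : ReflTransGen StepCC u u') :
    ReflTransGen StepCC (.cas ψ t) (.cas (Function.update ψ c (.some u')) t) := by
  induction h with
  | refl =>
    rw [← hc, Function.update_eq_self]
  | @tail b u' hb hstep ih =>
    have hstep' := StepCC.casB (Function.update ψ c (.some b)) c t (by simp) hstep
    rw [Function.update_idem] at hstep'
    exact ih.tail hstep'

lemma rtg_branches (l : List (Fin n)) (t : Tm n) :
    ∀ ψ ψ' : Fin n → Ob n, (∀ c, c ∉ l → ψ' c = ψ c) →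
    (∀ c, ψ' c = ψ c ∨ ∃ u u', ψ c = .some u ∧ ψ' c = .some u' ∧
      Relation.ReflTransGen StepCC u u') →
    Relation.ReflTransGen StepCC (.cas ψ t) (.cas ψ' t) := by
  induction l with
  | nil =>
    intro ψ ψ' h1 _
    rw [show ψ' = ψ from funext fun c => h1 c (by simp)]
  | cons c l ih =>
    intro ψ ψ' h1 h2
    have step1 : Relation.ReflTransGen StepCC (.cas ψ t)
        (.cas (Function.update ψ c (ψ' c)) t) := by
      rcases h2 c with he | ⟨u, u', hu, hu', hr⟩
      · rw [he, Function.update_eq_self]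
      · rw [hu']
        exact rtg_casB t hu hr
    refine step1.trans (ih _ _ (fun c' hc' => ?_) (fun c' => ?_))
    · by_cases hcc : c' = c
      · subst hcc; simp
      · rw [Function.update_of_ne hcc]
        exact h1 c' (by simp [hcc, hc'])
    · by_cases hcc : c' = c
      · subst hcc; simp
      · rw [Function.update_of_ne hcc]
        exact h2 c'

lemma not_stepCC_fail [NeZero n] {u : Tm n} : ¬ StepCC failTm u := by
  intro h
  unfold failTm at h
  cases h with
  | casT _ h' => cases h'
  | casB _ _ _ h' => cases h'

end Helpers

mutual

theorem mainT {n : ℕ} [NeZero n] (t : Tm n) : ∀ t' : Tm n, StepCC (cpl t) t' →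
    ∃ t₀ : Tm n, StepCC t t₀ ∧ Relation.ReflTransGen StepCC t' (cpl t₀) := by
  match t with
  | .var i => intro t' h; simp only [cpl] at h; cases h
  | .cst c => intro t' h; simp only [cpl] at h; cases h
  | .lam a =>
    intro t' h
    simp only [cpl] at h
    cases h with
    | lamC h' =>
      obtain ⟨a₀, hs, hr⟩ := mainT a _ h'
      exact ⟨.lam a₀, .lamC hs, rtg_lam hr⟩
  | .app a b =>
    intro t' h
    simp only [cpl] at h
    cases h with
    | appL _ h' =>
      obtain ⟨a₀, hs, hr⟩ := mainT a _ h'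
      exact ⟨.app a₀ b, .appL b hs, by simpa [cpl] using rtg_appL (u := cpl b) hr⟩
    | appR _ h' =>
      obtain ⟨b₀, hs, hr⟩ := mainT b _ h'
      exact ⟨.app a b₀, .appR a hs, by simpa [cpl] using rtg_appR (t := cpl a) hr⟩
  | .cas θ s =>
    intro t' h
    simp only [cpl] at h
    generalize hg : cpl s = cs at h
    cases h with
    | caseCase _ φ u =>
      match s, hg with
      | .var i, hg => simp [cpl] at hg
      | .cst c, hg => simp [cpl] at hg
      | .lam a, hg => simp [cpl] at hg
      | .app a b, hg => simp [cpl] at hg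
      | .cas φ₀ s₀, hg =>
        simp only [cpl, Tm.cas.injEq] at hg
        obtain ⟨hφ, hu⟩ := hg
        subst hφ hu
        refine ⟨.cas (compB θ φ₀) s₀, .caseCase θ φ₀ s₀, ?_⟩
        simp only [cpl]
        refine rtg_branches (List.finRange n) _ _ _
          (fun c hc => absurd (List.mem_finRange c) hc) (fun c => ?_)
        rcases hc : φ₀ c with _ | v
        · refine Or.inr ⟨.cas (fun c' => .some (cplO (θ c'))) failTm, failTm,
            by simp [compB, casO, hc, cplO], by simp [compB, casO, hc, cplO], ?_⟩
          refine Relation.ReflTransGen.single ?_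
          have h0 : (failTm : Tm n) = .cas (fun _ => .none) (.cst 0) := rfl
          rw [h0]
          have := StepCC.caseCase (fun c' => Ob.some (cplO (θ c'))) (fun _ => .none) (.cst (0 : Fin n))
          have heq : compB (fun c' => Ob.some (cplO (θ c'))) (fun _ => (.none : Ob n))
              = fun _ => (.none : Ob n) := funext fun _ => by simp [compB, casO]
          rw [heq] at this
          exact this
        · exact Or.inl (by simp [compB, casO, hc, cplO, cpl])
    | casT _ h' =>
      subst hg
      obtain ⟨s₀, hs, hr⟩ := mainT s _ h'
      exact ⟨.cas θ s₀, .casT θ hs, by simpa [cpl] using rtg_casT _ hr⟩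
    | casB _ c _ hc h' =>
      subst hg
      rename_i u'
      simp only [Ob.some.injEq] at hc
      subst hc
      obtain ⟨v, v₀, hv, hs, hr⟩ := mainO (θ c) _ h'
      refine ⟨.cas (Function.update θ c (.some v₀)) s, .casB θ c s hv hs, ?_⟩
      have hfun : (fun c' => Ob.some (cplO (Function.update θ c (.some v₀) c')))
          = Function.update (fun c' => Ob.some (cplO (θ c'))) c (.some (cpl v₀)) := by
        funext c'
        by_cases hcc : c' = c
        · subst hcc; simp [cplO]
        · simp [Function.update_of_ne hcc]
      simp only [cpl, hfun]
      have := rtg_casB (ψ := Function.update (fun c' => Ob.some (cplO (θ c'))) c (.some u'))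
        (c := c) (cpl s) (by simp) hr
      rwa [Function.update_idem] at this

theorem mainO {n : ℕ} [NeZero n] (o : Ob n) : ∀ t' : Tm n, StepCC (cplO o) t' →
    ∃ u u₀ : Tm n, o = .some u ∧ StepCC u u₀ ∧ Relation.ReflTransGen StepCC t' (cpl u₀) := by
  match o with
  | .none => intro t' h; simp only [cplO] at h; exact absurd h not_stepCC_fail
  | .some u =>
    intro t' h
    simp only [cplO] at h
    obtain ⟨u₀, hs, hr⟩ := mainT u _ h
    exact ⟨u, u₀, rfl, hs, hr⟩

end


/-- CaseCase reduction on completed terms: if `⌈t⌉` reduces in one CaseCase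
step to `t'`, then `t'` reduces in finitely many CaseCase steps to `⌈t₀⌉` for
some `t₀` with `t →_CaseCase t₀`. -/
theorem cpl_stepCC {n : ℕ} [NeZero n] {t t' : Tm n}
    (h : StepCC (cpl t) t') :
    ∃ t₀ : Tm n, StepCC t t₀ ∧ Relation.ReflTransGen StepCC t' (cpl t₀) :=
  mainT t t' h

end LC
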